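/- For w ∈ H¹₀(Ω)³ with Ω = 𝕋² × (h₋, h₊), h₋ < 0 < h₊, and any vector ν = (ν₁, ν₂, 1), the trace on Σ = 𝕋² × {0} satisfies |w₃|²_{L²(Σ)} ≤ (h₋h₊/(h₋-h₊)) ‖ν·∇w₃‖²_{L²(Ω)}. Note h₋h₊/(h₋-h₊) > 0 since h₋ < 0 < h₊. -/

import Mathlib

open MeasureTheory Real Set

/-- The partial derivative `∂ᵢ f` of a scalar function on `ℝ³`. -/
noncomputable def pd (i : Fin 3) (f : (Fin 3 → ℝ) → ℝ) (x : Fin 3 → ℝ) : ℝ :=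
  fderiv ℝ f x (Pi.single i 1)

/-- The horizontally periodic slab `Ω = 𝕋² × (h₋, h₊)`, realized as one periodicity cell. -/
def slab (hm hp L₁ L₂ : ℝ) : Set (Fin 3 → ℝ) :=
  {x | x 0 ∈ Ioo 0 (2 * π * L₁) ∧ x 1 ∈ Ioo 0 (2 * π * L₂) ∧ x 2 ∈ Ioo hm hp}

/-! ### Auxiliary lemmas -/

private lemma vec_eta (x : Fin 3 → ℝ) : (![x 0, x 1, x 2] : Fin 3 → ℝ) = x := by
  funext i; fin_cases i <;> rfl

private lemma cont_vec3 {α : Type*} [TopologicalSpace α] {u v w : α → ℝ}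
    (hu : Continuous u) (hv : Continuous v) (hw : Continuous w) :
    Continuous (fun x => (![u x, v x, w x] : Fin 3 → ℝ)) := by
  apply continuous_pi; intro i
  fin_cases i
  · simpa using hu
  · simpa using hv
  · simpa using hw

/-- Cauchy–Schwarz on an interval. -/
private lemma sq_setIntegral_le {a b : ℝ} (hab : a ≤ b) {h : ℝ → ℝ} (hc : Continuous h) :
    (∫ t in Ioc a b, h t) ^ 2 ≤ (b - a) * ∫ t in Ioc a b, h t ^ 2 := by
  rcases eq_or_lt_of_le hab with rfl | hlt
  · simp
  have hm0 : (0:ℝ) < b - a := sub_pos.2 hlt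
  set I : ℝ := ∫ t in Ioc a b, h t with hI
  set J : ℝ := ∫ t in Ioc a b, h t ^ 2 with hJ
  have hint1 : IntegrableOn h (Ioc a b) := hc.integrableOn_Ioc
  have hint2 : IntegrableOn (fun t => h t ^ 2) (Ioc a b) := (hc.pow 2).integrableOn_Ioc
  have hvol : (volume (Ioc a b)).toReal = b - a := by
    rw [Real.volume_Ioc, ENNReal.toReal_ofReal (by linarith)]
  set c : ℝ := I / (b - a) with hcdef
  have key : (0:ℝ) ≤ ∫ t in Ioc a b, (h t - c) ^ 2 :=
    setIntegral_nonneg measurableSet_Ioc fun t _ => sq_nonneg _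
  have expand : ∫ t in Ioc a b, (h t - c) ^ 2 = J - 2 * c * I + c ^ 2 * (b - a) := by
    have hsub : IntegrableOn (fun t => h t ^ 2 - 2 * c * h t) (Ioc a b) :=
      hint2.sub (hint1.const_mul (2 * c))
    have hconst : IntegrableOn (fun _ : ℝ => c ^ 2) (Ioc a b) :=
      integrableOn_const measure_Ioc_lt_top.ne
    have e0 : ∫ t in Ioc a b, (h t - c) ^ 2
        = ∫ t in Ioc a b, ((h t ^ 2 - 2 * c * h t) + c ^ 2) :=
      integral_congr_ae (Filter.Eventually.of_forall fun t => by ring)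
    rw [e0, integral_add hsub hconst, integral_sub hint2 (hint1.const_mul (2 * c)),
      integral_const_mul, setIntegral_const, measureReal_def, hvol, smul_eq_mul, ← hI, ← hJ]
    ring
  rw [expand] at key
  have e1 : c ^ 2 * (b - a) = I ^ 2 / (b - a) := by
    rw [hcdef]; field_simp
  have e2 : 2 * c * I = 2 * (I ^ 2) / (b - a) := by
    rw [hcdef]; ring
  rw [e1, e2] at key
  have key2 : I ^ 2 / (b - a) ≤ J := by
    have h3 : 2 * I ^ 2 / (b - a) - I ^ 2 / (b - a) = I ^ 2 / (b - a) := by ring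
    linarith [key, h3]
  calc I ^ 2 = I ^ 2 / (b - a) * (b - a) := by field_simp
    _ ≤ J * (b - a) := mul_le_mul_of_nonneg_right key2 hm0.le
    _ = (b - a) * J := by ring

/-- The 1D trace estimate along a line. -/
private lemma key1d {hm hp : ℝ} (hhm : hm < 0) (hhp : 0 < hp) {u u' : ℝ → ℝ}
    (hu : ∀ t, HasDerivAt u (u' t) t) (hc : Continuous u')
    (h1 : u hm = 0) (h2 : u hp = 0) :
    u 0 ^ 2 ≤ (hm * hp / (hm - hp)) * ∫ t in Ioo hm hp, u' t ^ 2 := by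
  have hii : ∀ a b : ℝ, IntervalIntegrable u' volume a b := fun a b => hc.intervalIntegrable a b
  have e1 : ∫ t in Ioc hm 0, u' t = u 0 := by
    have h := intervalIntegral.integral_eq_sub_of_hasDerivAt (f := u) (f' := u')
      (a := hm) (b := 0) (fun t _ => hu t) (hii hm 0)
    rw [intervalIntegral.integral_of_le hhm.le] at h
    rw [h, h1, sub_zero]
  have e2 : ∫ t in Ioc 0 hp, u' t = - u 0 := by
    have h := intervalIntegral.integral_eq_sub_of_hasDerivAt (f := u) (f' := u')
      (a := 0) (b := hp) (fun t _ => hu t) (hii 0 hp)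
    rw [intervalIntegral.integral_of_le hhp.le] at h
    rw [h, h2, zero_sub]
  have cs1 : u 0 ^ 2 ≤ (0 - hm) * ∫ t in Ioc hm 0, u' t ^ 2 := by
    have h := sq_setIntegral_le hhm.le hc
    rwa [e1] at h
  have cs2 : u 0 ^ 2 ≤ (hp - 0) * ∫ t in Ioc 0 hp, u' t ^ 2 := by
    have h := sq_setIntegral_le hhp.le hc
    rw [e2] at h
    simpa using h
  set J1 := ∫ t in Ioc hm 0, u' t ^ 2 with hJ1d
  set J2 := ∫ t in Ioc 0 hp, u' t ^ 2 with hJ2d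
  have hunion : ∫ t in Ioo hm hp, u' t ^ 2 = J1 + J2 := by
    rw [← integral_Ioc_eq_integral_Ioo, ← Ioc_union_Ioc_eq_Ioc hhm.le hhp.le,
      setIntegral_union (f := fun t => u' t ^ 2) (Ioc_disjoint_Ioc_of_le le_rfl) measurableSet_Ioc
        ((hc.pow 2).integrableOn_Ioc) ((hc.pow 2).integrableOn_Ioc)]
  have hJ1 : 0 ≤ J1 := setIntegral_nonneg measurableSet_Ioc fun _ _ => sq_nonneg _
  have hJ2 : 0 ≤ J2 := setIntegral_nonneg measurableSet_Ioc fun _ _ => sq_nonneg _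
  rw [hunion, div_mul_eq_mul_div, le_div_iff_of_neg (by linarith : hm - hp < 0)]
  nlinarith [mul_le_mul_of_nonneg_left cs1 hhp.le,
    mul_le_mul_of_nonneg_left cs2 (by linarith : (0:ℝ) ≤ -hm)]

/-- Translation invariance of the integral of a periodic function over a period cell. -/
private lemma shift_Ioo {T : ℝ} (hT : 0 < T) {h : ℝ → ℝ} (hc : Continuous h)
    (hper : ∀ s, h (s + T) = h s) (c : ℝ) :
    ∫ s in Ioo 0 T, h (s + c) = ∫ s in Ioo 0 T, h s := by
  have hP : Function.Periodic h T := hper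
  rw [← integral_Ioc_eq_integral_Ioo, ← integral_Ioc_eq_integral_Ioo,
    ← intervalIntegral.integral_of_le hT.le, ← intervalIntegral.integral_of_le hT.le,
    intervalIntegral.integral_comp_add_right h c]
  have h0 := hP.intervalIntegral_add_eq c 0
  rw [zero_add] at h0
  rw [show (0:ℝ) + c = c by ring, show T + c = c + T by ring, h0]

private lemma restrict_prod_eq {α β : Type*} [MeasureSpace α] [MeasureSpace β]
    [SigmaFinite (volume : Measure α)] [SigmaFinite (volume : Measure β)]
    (s : Set α) (t : Set β) :
    (volume : Measure (α × β)).restrict (s ×ˢ t)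
      = ((volume : Measure α).restrict s).prod ((volume : Measure β).restrict t) := by
  rw [Measure.volume_eq_prod, Measure.prod_restrict]

/-- Fubini over a product set. -/
private lemma fub {α β : Type*} [MeasureSpace α] [MeasureSpace β]
    [SigmaFinite (volume : Measure α)] [SigmaFinite (volume : Measure β)]
    {K : α × β → ℝ} {s : Set α} {t : Set β}
    (hint : IntegrableOn K (s ×ˢ t)) :
    ∫ z in s ×ˢ t, K z = ∫ x in s, ∫ y in t, K (x, y) := by
  have h := hint
  rw [IntegrableOn, restrict_prod_eq] at h
  rw [restrict_prod_eq]
  exact (integral_integral (f := fun x y => K (x, y)) h).symm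

private lemma fubswap {α β : Type*} [MeasureSpace α] [MeasureSpace β]
    [SigmaFinite (volume : Measure α)] [SigmaFinite (volume : Measure β)]
    {K : α × β → ℝ} {s : Set α} {t : Set β}
    (hint : IntegrableOn K (s ×ˢ t)) :
    ∫ x in s, ∫ y in t, K (x, y) = ∫ y in t, ∫ x in s, K (x, y) := by
  have h := hint
  rw [IntegrableOn, restrict_prod_eq] at h
  exact integral_integral_swap (f := fun x y => K (x, y)) h

private lemma intOn_box {K : (ℝ × ℝ) × ℝ → ℝ} (hK : Continuous K)
    (a₁ a₂ b₁ b₂ c₁ c₂ : ℝ) :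
    IntegrableOn K ((Ioo a₁ a₂ ×ˢ Ioo b₁ b₂) ×ˢ Ioo c₁ c₂) :=
  ((hK.continuousOn).integrableOn_compact
      (((isCompact_Icc (a := a₁) (b := a₂)).prod (isCompact_Icc (a := b₁) (b := b₂))).prod
        (isCompact_Icc (a := c₁) (b := c₂)))).mono_set
    (Set.prod_mono (Set.prod_mono Ioo_subset_Icc_self Ioo_subset_Icc_self) Ioo_subset_Icc_self)

private lemma intOn_rect {K : ℝ × ℝ → ℝ} (hK : Continuous K) (a₁ a₂ b₁ b₂ : ℝ) :
    IntegrableOn K (Ioo a₁ a₂ ×ˢ Ioo b₁ b₂) :=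
  ((hK.continuousOn).integrableOn_compact
      ((isCompact_Icc (a := a₁) (b := a₂)).prod (isCompact_Icc (a := b₁) (b := b₂)))).mono_set
    (Set.prod_mono Ioo_subset_Icc_self Ioo_subset_Icc_self)

private noncomputable def e3 : (Fin 3 → ℝ) ≃ᵐ (ℝ × ℝ) × ℝ :=
  ((MeasurableEquiv.piFinSuccAbove (fun _ : Fin 3 => ℝ) 0).trans
    ((MeasurableEquiv.refl ℝ).prodCongr MeasurableEquiv.finTwoArrow)).trans
    MeasurableEquiv.prodAssoc.symm

private lemma e3_apply (x : Fin 3 → ℝ) : e3 x = ((x 0, x 1), x 2) := rfl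

private lemma e3_mp : MeasurePreserving e3 volume volume := by
  have h1 := volume_preserving_piFinSuccAbove (fun _ : Fin 3 => ℝ) 0
  have h2 := (MeasurePreserving.id (volume : Measure ℝ)).prod (volume_preserving_finTwoArrow ℝ)
  have h3 := (volume_preserving_prodAssoc (α₁ := ℝ) (β₁ := ℝ) (γ₁ := ℝ)).symm
    MeasurableEquiv.prodAssoc
  exact (h3.comp (h2.comp h1) : _)

/-- Directional trace estimate: for a scalar `w₃ ∈ H¹₀(Ω)` with
`h₋ < 0 < h₊` and any `ν = (ν₁, ν₂, 1)`, the trace on `Σ = 𝕋² × {0}` satisfies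
`|w₃|²_{L²(Σ)} ≤ (h₋h₊/(h₋-h₊)) ‖ν·∇w₃‖²_{L²(Ω)}`. -/
theorem directional_trace_estimate
    (hm hp L₁ L₂ : ℝ) (hhm : hm < 0) (hhp : 0 < hp) (hL₁ : 0 < L₁) (hL₂ : 0 < L₂)
    (f : (Fin 3 → ℝ) → ℝ) (hf : ContDiff ℝ 1 f)
    (hper₁ : ∀ x, f (x + (2 * π * L₁) • (Pi.single 0 1 : Fin 3 → ℝ)) = f x)
    (hper₂ : ∀ x, f (x + (2 * π * L₂) • (Pi.single 1 1 : Fin 3 → ℝ)) = f x)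
    (hbc : ∀ x : Fin 3 → ℝ, x 2 = hm ∨ x 2 = hp → f x = 0)
    (ν : Fin 3 → ℝ) (hν : ν 2 = 1) :
    (∫ p in (Ioo 0 (2 * π * L₁)) ×ˢ (Ioo 0 (2 * π * L₂)),
        (f ![p.1, p.2, (0 : ℝ)]) ^ 2) ≤
      (hm * hp / (hm - hp)) *
        ∫ x in slab hm hp L₁ L₂, (∑ i, ν i * pd i f x) ^ 2 := by
  have hπ : (0:ℝ) < π := pi_pos
  set a : ℝ := 2 * π * L₁ with ha_def
  set b : ℝ := 2 * π * L₂ with hb_def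
  have ha : 0 < a := by positivity
  have hb : 0 < b := by positivity
  set A : Set ℝ := Ioo (0:ℝ) a with hA_def
  set B : Set ℝ := Ioo (0:ℝ) b with hB_def
  set C : Set ℝ := Ioo hm hp with hC_def
  set cst : ℝ := hm * hp / (hm - hp) with hcst_def
  set g : (Fin 3 → ℝ) → ℝ := fun x => ∑ i, ν i * pd i f x with hg_def
  have hfd : Differentiable ℝ f := hf.differentiable one_ne_zero
  have hfc : Continuous f := hf.continuous
  have hg_cont : Continuous g := by
    apply continuous_finset_sum
    intro i _
    exact continuous_const.mul ((hf.continuous_fderiv one_ne_zero).clm_apply continuous_const)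
  have hfderiv_apply : ∀ x, (fderiv ℝ f x) ν = g x := by
    intro x
    have hν' : ν = ∑ i : Fin 3, ν i • (Pi.single i 1 : Fin 3 → ℝ) := by
      funext j
      simp [Pi.single_apply]
    conv_lhs => rw [hν']
    rw [map_sum]
    simp [hg_def, pd]
  have hfderiv_per : ∀ (v : Fin 3 → ℝ), (∀ x, f (x + v) = f x) →
      ∀ x, fderiv ℝ f (x + v) = fderiv ℝ f x := by
    intro v hv x
    have h1 : HasFDerivAt (fun y => f (y + v)) (fderiv ℝ f (x + v)) x := by
      have h := (hfd (x + v)).hasFDerivAt.comp x ((hasFDerivAt_id x).add_const v)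
      exact h
    have h2 : HasFDerivAt f (fderiv ℝ f (x + v)) x := by
      have he : (fun y => f (y + v)) = f := funext hv
      rwa [he] at h1
    exact h2.fderiv.symm ▸ rfl
  have hg_per : ∀ (v : Fin 3 → ℝ), (∀ x, f (x + v) = f x) → ∀ x, g (x + v) = g x := by
    intro v hv x
    simp only [hg_def, pd, hfderiv_per v hv x]
  -- vector identities
  have hvec : ∀ (p₁ p₂ t : ℝ),
      (![p₁, p₂, (0:ℝ)] + t • ν) = ![p₁ + t * ν 0, p₂ + t * ν 1, t] := by
    intro p₁ p₂ t; funext i; fin_cases i <;> simp [hν]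
  have hvadd1 : ∀ (p q t c : ℝ),
      (![p, q, t] : Fin 3 → ℝ) + c • (Pi.single 0 1 : Fin 3 → ℝ) = ![p + c, q, t] := by
    intro p q t c; funext i; fin_cases i <;> simp
  have hvadd2 : ∀ (p q t c : ℝ),
      (![p, q, t] : Fin 3 → ℝ) + c • (Pi.single 1 1 : Fin 3 → ℝ) = ![p, q + c, t] := by
    intro p q t c; funext i; fin_cases i <;> simp
  have hga : ∀ (p q t : ℝ), g ![p + a, q, t] = g ![p, q, t] := by
    intro p q t
    rw [← hvadd1]
    exact hg_per _ hper₁ _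
  have hgb : ∀ (p q t : ℝ), g ![p, q + b, t] = g ![p, q, t] := by
    intro p q t
    rw [← hvadd2]
    exact hg_per _ hper₂ _
  -- the pointwise 1D trace estimate
  have key : ∀ p₁ p₂ : ℝ,
      f ![p₁, p₂, (0:ℝ)] ^ 2 ≤ cst * ∫ t in C, g ![p₁ + t * ν 0, p₂ + t * ν 1, t] ^ 2 := by
    intro p₁ p₂
    have hγ : ∀ t : ℝ, HasDerivAt (fun s : ℝ => (![p₁, p₂, (0:ℝ)] + s • ν)) ν t := by
      intro t
      simpa using ((hasDerivAt_id t).smul_const ν).const_add (![p₁, p₂, (0:ℝ)])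
    have hu : ∀ t : ℝ, HasDerivAt (fun s : ℝ => f (![p₁, p₂, (0:ℝ)] + s • ν))
        (g (![p₁, p₂, (0:ℝ)] + t • ν)) t := by
      intro t
      have h0 := (hfd (![p₁, p₂, (0:ℝ)] + t • ν)).hasFDerivAt.comp_hasDerivAt t (hγ t)
      rwa [hfderiv_apply] at h0
    have hucont : Continuous fun t : ℝ => g (![p₁, p₂, (0:ℝ)] + t • ν) := by
      apply hg_cont.comp
      fun_prop
    have hbm : f (![p₁, p₂, (0:ℝ)] + hm • ν) = 0 := by
      apply hbc; left
      show (![p₁, p₂, (0:ℝ)] + hm • ν) 2 = hm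
      simp [hν]
    have hbp : f (![p₁, p₂, (0:ℝ)] + hp • ν) = 0 := by
      apply hbc; right
      show (![p₁, p₂, (0:ℝ)] + hp • ν) 2 = hp
      simp [hν]
    have hk := key1d hhm hhp hu hucont hbm hbp
    simp only [zero_smul, add_zero] at hk
    calc f ![p₁, p₂, (0:ℝ)] ^ 2
        ≤ (hm * hp / (hm - hp)) * ∫ t in Ioo hm hp, g (![p₁, p₂, (0:ℝ)] + t • ν) ^ 2 := hk
      _ = cst * ∫ t in C, g ![p₁ + t * ν 0, p₂ + t * ν 1, t] ^ 2 := by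
          rw [← hcst_def, ← hC_def]
          congr 1
          refine integral_congr_ae (Filter.Eventually.of_forall fun t => ?_)
          simp only [hvec]
  -- continuous integrands
  set Gσ : (ℝ × ℝ) × ℝ → ℝ :=
    fun z => g ![z.1.1 + z.2 * ν 0, z.1.2 + z.2 * ν 1, z.2] ^ 2 with hGσ_def
  set G₀ : (ℝ × ℝ) × ℝ → ℝ := fun z => g ![z.1.1, z.1.2, z.2] ^ 2 with hG₀_def
  have hGσc : Continuous Gσ := by
    apply Continuous.pow
    apply hg_cont.comp
    exact cont_vec3 (by fun_prop) (by fun_prop) (by fun_prop)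
  have hG₀c : Continuous G₀ := by
    apply Continuous.pow
    apply hg_cont.comp
    exact cont_vec3 (by fun_prop) (by fun_prop) (by fun_prop)
  have hIntσ : IntegrableOn Gσ ((A ×ˢ B) ×ˢ C) := by
    rw [hA_def, hB_def, hC_def]; exact intOn_box hGσc 0 a 0 b hm hp
  have hInt₀ : IntegrableOn G₀ ((A ×ˢ B) ×ˢ C) := by
    rw [hA_def, hB_def, hC_def]; exact intOn_box hG₀c 0 a 0 b hm hp
  -- identification of the slab integral
  have hslab : slab hm hp L₁ L₂ = e3 ⁻¹' ((A ×ˢ B) ×ˢ C) := by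
    ext x
    simp [slab, e3_apply, Set.mem_prod, hA_def, hB_def, hC_def, ha_def, hb_def]
    tauto
  have hR : ∫ x in slab hm hp L₁ L₂, g x ^ 2 = ∫ z in (A ×ˢ B) ×ˢ C, G₀ z := by
    rw [hslab]
    rw [← e3_mp.setIntegral_preimage_emb e3.measurableEmbedding G₀ ((A ×ˢ B) ×ˢ C)]
    refine integral_congr_ae (Filter.Eventually.of_forall fun x => ?_)
    simp only [hG₀_def, e3_apply]
    rw [vec_eta]
  -- main chain
  have hH_int : IntegrableOn (fun p : ℝ × ℝ => ∫ t in C, Gσ (p, t)) (A ×ˢ B) := by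
    have h := hIntσ
    rw [IntegrableOn, restrict_prod_eq] at h
    exact h.integral_prod_left
  have hIntf : IntegrableOn (fun p : ℝ × ℝ => f ![p.1, p.2, (0:ℝ)] ^ 2) (A ×ˢ B) := by
    rw [hA_def, hB_def]
    exact intOn_rect ((hfc.comp (cont_vec3 (by fun_prop) (by fun_prop) (by fun_prop))).pow 2)
      0 a 0 b
  have step1 : (∫ p in A ×ˢ B, f ![p.1, p.2, (0:ℝ)] ^ 2)
      ≤ ∫ p in A ×ˢ B, cst * ∫ t in C, Gσ (p, t) := by
    refine setIntegral_mono_on hIntf (hH_int.const_mul cst)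
      ((measurableSet_Ioo.prod measurableSet_Ioo)) ?_
    intro p _
    exact key p.1 p.2
  have step2 : (∫ p in A ×ˢ B, cst * ∫ t in C, Gσ (p, t))
      = cst * ∫ p in A ×ˢ B, ∫ t in C, Gσ (p, t) := integral_const_mul cst _
  have step3 : (∫ p in A ×ˢ B, ∫ t in C, Gσ (p, t))
      = ∫ t in C, ∫ p in A ×ˢ B, Gσ (p, t) := fubswap hIntσ
  -- per-slice translation invariance
  have step4 : ∀ t : ℝ, (∫ p in A ×ˢ B, Gσ (p, t)) = ∫ p in A ×ˢ B, G₀ (p, t) := by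
    intro t
    have hc1 : Continuous fun q : ℝ × ℝ => g ![q.1 + t * ν 0, q.2 + t * ν 1, t] ^ 2 := by
      apply Continuous.pow
      exact hg_cont.comp (cont_vec3 (by fun_prop) (by fun_prop) (by fun_prop))
    have hc2 : Continuous fun q : ℝ × ℝ => g ![q.1 + t * ν 0, q.2, t] ^ 2 := by
      apply Continuous.pow
      exact hg_cont.comp (cont_vec3 (by fun_prop) (by fun_prop) (by fun_prop))
    have hc3 : Continuous fun q : ℝ × ℝ => g ![q.1, q.2, t] ^ 2 := by
      apply Continuous.pow
      exact hg_cont.comp (cont_vec3 (by fun_prop) (by fun_prop) (by fun_prop))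
    have hi1 : IntegrableOn (fun q : ℝ × ℝ => g ![q.1 + t * ν 0, q.2 + t * ν 1, t] ^ 2)
        (A ×ˢ B) := by rw [hA_def, hB_def]; exact intOn_rect hc1 0 a 0 b
    have hi2 : IntegrableOn (fun q : ℝ × ℝ => g ![q.1 + t * ν 0, q.2, t] ^ 2)
        (A ×ˢ B) := by rw [hA_def, hB_def]; exact intOn_rect hc2 0 a 0 b
    have hi3 : IntegrableOn (fun q : ℝ × ℝ => g ![q.1, q.2, t] ^ 2)
        (A ×ˢ B) := by rw [hA_def, hB_def]; exact intOn_rect hc3 0 a 0 b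
    calc (∫ p in A ×ˢ B, Gσ (p, t))
        = ∫ p₁ in A, ∫ p₂ in B, g ![p₁ + t * ν 0, p₂ + t * ν 1, t] ^ 2 :=
          fub (K := fun q : ℝ × ℝ => g ![q.1 + t * ν 0, q.2 + t * ν 1, t] ^ 2) hi1
      _ = ∫ p₁ in A, ∫ p₂ in B, g ![p₁ + t * ν 0, p₂, t] ^ 2 := by
          refine integral_congr_ae (Filter.Eventually.of_forall fun p₁ => ?_)
          rw [hB_def]
          beta_reduce
          refine shift_Ioo (h := fun s => g ![p₁ + t * ν 0, s, t] ^ 2) hb ?_ ?_ (t * ν 1)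
          · apply Continuous.pow
            exact hg_cont.comp (cont_vec3 (by fun_prop) (by fun_prop) (by fun_prop))
          · intro s
            simp only [hgb]
      _ = ∫ p₂ in B, ∫ p₁ in A, g ![p₁ + t * ν 0, p₂, t] ^ 2 :=
          fubswap (K := fun q : ℝ × ℝ => g ![q.1 + t * ν 0, q.2, t] ^ 2) hi2
      _ = ∫ p₂ in B, ∫ p₁ in A, g ![p₁, p₂, t] ^ 2 := by
          refine integral_congr_ae (Filter.Eventually.of_forall fun p₂ => ?_)
          rw [hA_def]
          beta_reduce
          refine shift_Ioo (h := fun s => g ![s, p₂, t] ^ 2) ha ?_ ?_ (t * ν 0)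
          · apply Continuous.pow
            exact hg_cont.comp (cont_vec3 (by fun_prop) (by fun_prop) (by fun_prop))
          · intro s
            simp only [hga]
      _ = ∫ p₁ in A, ∫ p₂ in B, g ![p₁, p₂, t] ^ 2 :=
          (fubswap (K := fun q : ℝ × ℝ => g ![q.1, q.2, t] ^ 2) hi3).symm
      _ = ∫ p in A ×ˢ B, G₀ (p, t) :=
          (fub (K := fun q : ℝ × ℝ => g ![q.1, q.2, t] ^ 2) hi3).symm
  have step5 : (∫ t in C, ∫ p in A ×ˢ B, G₀ (p, t))
      = ∫ z in (A ×ˢ B) ×ˢ C, G₀ z := by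
    rw [← fubswap hInt₀, ← fub hInt₀]
  calc (∫ p in A ×ˢ B, f ![p.1, p.2, (0:ℝ)] ^ 2)
      ≤ ∫ p in A ×ˢ B, cst * ∫ t in C, Gσ (p, t) := step1
    _ = cst * ∫ p in A ×ˢ B, ∫ t in C, Gσ (p, t) := step2
    _ = cst * ∫ t in C, ∫ p in A ×ˢ B, Gσ (p, t) := by rw [step3]
    _ = cst * ∫ t in C, ∫ p in A ×ˢ B, G₀ (p, t) := by
        congr 1
        exact integral_congr_ae (Filter.Eventually.of_forall fun t => step4 t)
    _ = cst * ∫ z in (A ×ˢ B) ×ˢ C, G₀ z := by rw [step5]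
    _ = cst * ∫ x in slab hm hp L₁ L₂, g x ^ 2 := by rw [hR]
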